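/- Let π : A → B be a surjective morphism of order-unit spaces, let L be a Lipschitz seminorm on A, and let L_B be the quotient seminorm on B. Then the dual map π' : B'° → A'° is an isometry for the dual seminorms L_B' and L'; consequently S(π) : (S(B),ρ_{L_B}) → (S(A),ρ_L) is an isometry. Moreover, if L is a Lip-norm then L_B is a Lip-norm. -/

import Mathlib

open scoped ENNReal

/-- An order-unit space in the sense of Kadison: a partially ordered real vector
space with a positive order unit `e` satisfying the order-unit property and the
Archimedean property. -/
structure OrderUnitSpace : Type 1 where
  carrier : Type
  [toAddCommGroup : AddCommGroup carrier]
  [toModule : Module ℝ carrier]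
  [toPartialOrder : PartialOrder carrier]
  add_le_add_left' : ∀ a b : carrier, a ≤ b → ∀ c : carrier, c + a ≤ c + b
  smul_nonneg' : ∀ (r : ℝ) (a : carrier), 0 ≤ r → 0 ≤ a → 0 ≤ r • a
  e : carrier
  e_nonneg : 0 ≤ e
  orderUnit : ∀ a : carrier, ∃ r : ℝ, a ≤ r • e
  arch : ∀ a : carrier, (∀ r : ℝ, 0 < r → a ≤ r • e) → a ≤ 0

attribute [instance] OrderUnitSpace.toAddCommGroup OrderUnitSpace.toModule
  OrderUnitSpace.toPartialOrder

/-- The topology generated by the open balls of a distance function. -/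
def ballTopology {S : Type*} (ρ : S → S → ℝ≥0∞) : TopologicalSpace S :=
  TopologicalSpace.generateFrom
    {U : Set S | ∃ (μ : S) (ε : ℝ≥0∞), 0 < ε ∧ U = {ν | ρ μ ν < ε}}

/-- The quotient seminorm of `L` along the surjection `π`. -/
noncomputable def quotientSeminorm {α β : Type*} (π : α → β) (L : α → ℝ) (b : β) : ℝ :=
  sInf {r : ℝ | ∃ a, π a = b ∧ L a = r}

/-- `L` induces `LB` via `π`, i.e. `LB` is the quotient seminorm of `L` for `π`. -/
def Induces {α β : Type*} (π : α → β) (L : α → ℝ) (LB : β → ℝ) : Prop :=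
  ∀ b, LB b = quotientSeminorm π L b

/-- Hausdorff distance between two subsets with respect to a distance function. -/
noncomputable def hausdorffDistWith {S : Type*} (ρ : S → S → ℝ≥0∞) (T U : Set S) : ℝ≥0∞ :=
  max (⨆ t ∈ T, ⨅ u ∈ U, ρ t u) (⨆ u ∈ U, ⨅ t ∈ T, ρ t u)

namespace OrderUnitSpace

variable (A B : OrderUnitSpace)

theorem le_of_sub_nonneg'' {x y : A.carrier} (h : 0 ≤ y - x) : x ≤ y := by
  have h2 := A.add_le_add_left' 0 (y - x) h x
  have h3 : x + (y - x) = y := by abel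
  rw [add_zero, h3] at h2
  exact h2

theorem smul_e_mono {r s : ℝ} (h : r ≤ s) : r • A.e ≤ s • A.e := by
  apply A.le_of_sub_nonneg''
  have h3 : s • A.e - r • A.e = (s - r) • A.e := by rw [sub_smul]
  rw [h3]
  exact A.smul_nonneg' _ _ (by linarith) A.e_nonneg

/-- The order-unit norm. -/
noncomputable def onorm (a : A.carrier) : ℝ :=
  sInf {r : ℝ | -(r • A.e) ≤ a ∧ a ≤ r • A.e}

/-- A state: a unital positive linear functional. -/
def IsState (μ : A.carrier →ₗ[ℝ] ℝ) : Prop :=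
  μ A.e = 1 ∧ ∀ a : A.carrier, 0 ≤ a → 0 ≤ μ a

/-- The state space. -/
def State : Type := {μ : A.carrier →ₗ[ℝ] ℝ // A.IsState μ}

/-- The weak-* topology on the state space. -/
instance : TopologicalSpace A.State :=
  TopologicalSpace.induced (fun μ : A.State => (μ.1 : A.carrier → ℝ)) Pi.topologicalSpace

/-- The metric `ρ_L` on the state space defined by a seminorm `L`. -/
noncomputable def rho (L : Seminorm ℝ A.carrier) (μ ν : A.State) : ℝ≥0∞ :=
  ⨆ a : {a : A.carrier // L a ≤ 1}, ENNReal.ofReal |μ.1 a.1 - ν.1 a.1|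

/-- A Lipschitz seminorm: its null space is exactly `ℝ e`. -/
def IsLipschitz (L : Seminorm ℝ A.carrier) : Prop :=
  ∀ a : A.carrier, L a = 0 ↔ ∃ t : ℝ, a = t • A.e

/-- A Lip-norm: a Lipschitz seminorm whose metric `ρ_L` induces the weak-* topology. -/
def IsLipNorm (L : Seminorm ℝ A.carrier) : Prop :=
  A.IsLipschitz L ∧ ballTopology (A.rho L) = (inferInstance : TopologicalSpace A.State)

/-- The diameter of the state space for `ρ_L`. -/
noncomputable def diam (L : Seminorm ℝ A.carrier) : ℝ≥0∞ :=
  ⨆ (μ : A.State) (ν : A.State), A.rho L μ ν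

/-- The radius: half the diameter. -/
noncomputable def radius (L : Seminorm ℝ A.carrier) : ℝ≥0∞ := A.diam L / 2

/-- Morphism of order-unit spaces: a unital positive linear map. -/
def IsMorphism (f : A.carrier →ₗ[ℝ] B.carrier) : Prop :=
  f A.e = B.e ∧ ∀ a : A.carrier, 0 ≤ a → 0 ≤ f a

/-- Pull back a state along a morphism; this is `S(π)`. -/
noncomputable def pullState (f : A.carrier →ₗ[ℝ] B.carrier) (hf : A.IsMorphism B f)
    (μ : B.State) : A.State :=
  ⟨(μ.1).comp f, by
    constructor
    · rw [LinearMap.comp_apply, hf.1]; exact μ.2.1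
    · intro a ha; exact μ.2.2 _ (hf.2 a ha)⟩

/-- The direct sum `A ⊕ B` as an order-unit space. -/
@[reducible] def prod : OrderUnitSpace where
  carrier := A.carrier × B.carrier
  add_le_add_left' := by
    intro a b hab c
    rw [Prod.le_def] at hab ⊢
    exact ⟨A.add_le_add_left' _ _ hab.1 _, B.add_le_add_left' _ _ hab.2 _⟩
  smul_nonneg' := by
    intro r a hr ha
    rw [Prod.le_def] at ha ⊢
    exact ⟨A.smul_nonneg' r a.1 hr ha.1, B.smul_nonneg' r a.2 hr ha.2⟩
  e := (A.e, B.e)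
  e_nonneg := by
    rw [Prod.le_def]
    exact ⟨A.e_nonneg, B.e_nonneg⟩
  orderUnit := by
    intro a
    obtain ⟨r₁, h1⟩ := A.orderUnit a.1
    obtain ⟨r₂, h2⟩ := B.orderUnit a.2
    refine ⟨max r₁ r₂, ?_⟩
    rw [Prod.le_def]
    exact ⟨le_trans h1 (A.smul_e_mono (le_max_left _ _)),
      le_trans h2 (B.smul_e_mono (le_max_right _ _))⟩
  arch := by
    intro a h
    rw [Prod.le_def]
    exact ⟨A.arch a.1 fun r hr => ((Prod.le_def.mp (h r hr)).1),
      B.arch a.2 fun r hr => ((Prod.le_def.mp (h r hr)).2)⟩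

/-- The embedding of `S(A)` into `S(A ⊕ B)` dual to the first coordinate projection. -/
noncomputable def leftState (μ : A.State) : (A.prod B).State :=
  ⟨(μ.1).comp (LinearMap.fst ℝ A.carrier B.carrier), by
    constructor
    · exact μ.2.1
    · intro p hp; exact μ.2.2 p.1 hp.1⟩

/-- The embedding of `S(B)` into `S(A ⊕ B)` dual to the second coordinate projection. -/
noncomputable def rightState (ν : B.State) : (A.prod B).State :=
  ⟨(ν.1).comp (LinearMap.snd ℝ A.carrier B.carrier), by
    constructor
    · exact ν.2.1
    · intro p hp; exact ν.2.2 p.2 hp.2⟩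

/-- The set `M(L_A, L_B)` of Lip-norms on `A ⊕ B` inducing `L_A` and `L_B`
via the coordinate projections. -/
def admissible (LA : Seminorm ℝ A.carrier) (LB : Seminorm ℝ B.carrier) :
    Set (Seminorm ℝ (A.prod B).carrier) :=
  {L | (A.prod B).IsLipNorm L ∧
    Induces (Prod.fst : A.carrier × B.carrier → A.carrier) (fun p => L p) (fun a => LA a) ∧
    Induces (Prod.snd : A.carrier × B.carrier → B.carrier) (fun p => L p) (fun b => LB b)}

/-- Quantum Gromov–Hausdorff distance. -/
noncomputable def distq (LA : Seminorm ℝ A.carrier) (LB : Seminorm ℝ B.carrier) : ℝ≥0∞ :=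
  ⨅ L ∈ A.admissible B LA LB,
    hausdorffDistWith ((A.prod B).rho L) (Set.range (A.leftState B)) (Set.range (A.rightState B))

end OrderUnitSpace

/-- A norm-bounded linear functional on an order-unit space. -/
def BoundedFunctional (A : OrderUnitSpace) (lam : A.carrier →ₗ[ℝ] ℝ) : Prop :=
  ∃ C : ℝ, ∀ a : A.carrier, |lam a| ≤ C * A.onorm a

/-- The dual seminorm `L'(λ) = sup {|λ(a)| : L(a) ≤ 1}` (possibly `+∞`). -/
noncomputable def dualSeminorm (A : OrderUnitSpace) (L : Seminorm ℝ A.carrier)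
    (lam : A.carrier →ₗ[ℝ] ℝ) : ℝ≥0∞ :=
  ⨆ a : {a : A.carrier // L a ≤ 1}, ENNReal.ofReal |lam a.1|

namespace OrderUnitSpace
variable (A : OrderUnitSpace)

theorem sub_nonneg_of_le'' {x y : A.carrier} (h : x ≤ y) : 0 ≤ y - x := by
  have h2 := A.add_le_add_left' x y h (-x)
  have h3 : -x + y = y - x := by abel
  rw [neg_add_cancel, h3] at h2
  exact h2

theorem add_le_add_right'' {x y : A.carrier} (h : x ≤ y) (c : A.carrier) :
    x + c ≤ y + c := by
  have := A.add_le_add_left' x y h c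
  rwa [add_comm c x, add_comm c y] at this

theorem smul_le_smul'' {x y : A.carrier} {c : ℝ} (hc : 0 ≤ c) (h : x ≤ y) :
    c • x ≤ c • y := by
  apply A.le_of_sub_nonneg''
  rw [← smul_sub]
  exact A.smul_nonneg' _ _ hc (A.sub_nonneg_of_le'' h)

theorem neg_nonpos_of_nonneg'' {x : A.carrier} (h : 0 ≤ x) : -x ≤ 0 := by
  have h2 := A.add_le_add_left' 0 x h (-x)
  rwa [add_zero, neg_add_cancel] at h2

theorem nonneg_of_neg_nonpos'' {x : A.carrier} (h : -x ≤ 0) : 0 ≤ x := by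
  have h2 := A.add_le_add_left' (-x) 0 h x
  rwa [add_zero, add_neg_cancel] at h2

/-- If `e ≠ 0` then `0 ≤ r • e` implies `0 ≤ r`. -/
theorem nonneg_of_smul_e_nonneg (he : A.e ≠ 0) {r : ℝ} (h : 0 ≤ r • A.e) : 0 ≤ r := by
  by_contra hr
  push_neg at hr
  have h2 : (0:ℝ) ≤ -r⁻¹ := by
    have : r⁻¹ < 0 := inv_neg''.2 hr
    linarith
  have h3 : (0:A.carrier) ≤ (-r⁻¹) • (r • A.e) := A.smul_nonneg' _ _ h2 h
  rw [smul_smul] at h3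
  have h4 : -r⁻¹ * r = -1 := by rw [neg_mul, inv_mul_cancel₀ (ne_of_lt hr)]
  rw [h4, neg_smul, one_smul] at h3
  have h5 : A.e ≤ 0 := by
    have := A.neg_nonpos_of_nonneg'' h3
    rwa [neg_neg] at this
  exact he (le_antisymm h5 A.e_nonneg)

/-- The upper sublinear functional `p(a) = inf { r | a ≤ r e }`. -/
noncomputable def upper (a : A.carrier) : ℝ := sInf {r : ℝ | a ≤ r • A.e}

theorem upperSet_nonempty (a : A.carrier) : {r : ℝ | a ≤ r • A.e}.Nonempty :=
  A.orderUnit a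

theorem upperSet_bddBelow (he : A.e ≠ 0) (a : A.carrier) :
    BddBelow {r : ℝ | a ≤ r • A.e} := by
  obtain ⟨s, hs⟩ := A.orderUnit (-a)
  refine ⟨-s, fun r hr => ?_⟩
  -- -s • e ≤ a ≤ r • e
  have h1 : -(s • A.e) ≤ a := by
    have := A.add_le_add_left' (-a) (s • A.e) hs (a - s • A.e)
    have e1 : a - s • A.e + -a = -(s • A.e) := by abel
    have e2 : a - s • A.e + s • A.e = a := by abel
    rwa [e1, e2] at this
  have h2 : -(s • A.e) ≤ r • A.e := le_trans h1 hr
  have h3 : (0:A.carrier) ≤ (r + s) • A.e := by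
    have := A.sub_nonneg_of_le'' h2
    have e3 : r • A.e - -(s • A.e) = (r + s) • A.e := by
      rw [add_smul]; abel
    rwa [e3] at this
  have := A.nonneg_of_smul_e_nonneg he h3
  linarith

theorem upperSet_mono {a : A.carrier} {r r' : ℝ} (h : a ≤ r • A.e) (hrr : r ≤ r') :
    a ≤ r' • A.e := le_trans h (A.smul_e_mono hrr)

theorem le_upper_smul_e (he : A.e ≠ 0) (a : A.carrier) : a ≤ A.upper a • A.e := by
  have key : ∀ r : ℝ, 0 < r → a - A.upper a • A.e ≤ r • A.e := by
    intro r hr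
    have h1 : sInf {r : ℝ | a ≤ r • A.e} < A.upper a + r := by
      change A.upper a < _; linarith
    obtain ⟨s, hs, hslt⟩ := exists_lt_of_csInf_lt (A.upperSet_nonempty a) h1
    have h2 : a ≤ (A.upper a + r) • A.e := A.upperSet_mono hs hslt.le
    have h3 := A.add_le_add_right'' h2 (-(A.upper a • A.e))
    have e1 : a + -(A.upper a • A.e) = a - A.upper a • A.e := by abel
    have e2 : (A.upper a + r) • A.e + -(A.upper a • A.e) = r • A.e := by
      rw [add_smul]; abel
    rwa [e1, e2] at h3
  have h4 := A.arch _ key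
  have h5 := A.add_le_add_right'' h4 (A.upper a • A.e)
  have e1 : a - A.upper a • A.e + A.upper a • A.e = a := by abel
  rw [e1, zero_add] at h5
  exact h5

theorem upper_le (he : A.e ≠ 0) {a : A.carrier} {r : ℝ} (h : a ≤ r • A.e) :
    A.upper a ≤ r := csInf_le (A.upperSet_bddBelow he a) h

theorem upper_add (he : A.e ≠ 0) (a b : A.carrier) :
    A.upper (a + b) ≤ A.upper a + A.upper b := by
  apply A.upper_le he
  have h1 := A.add_le_add_right'' (A.le_upper_smul_e he a) b
  have h2 := A.add_le_add_left' b (A.upper b • A.e) (A.le_upper_smul_e he b) (A.upper a • A.e)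
  have h3 := le_trans h1 h2
  rwa [add_smul]

theorem upper_smul_le (he : A.e ≠ 0) {c : ℝ} (hc : 0 < c) (a : A.carrier) :
    A.upper (c • a) ≤ c * A.upper a := by
  apply A.upper_le he
  have := A.smul_le_smul'' hc.le (A.le_upper_smul_e he a)
  rwa [smul_smul] at this

theorem upper_smul (he : A.e ≠ 0) {c : ℝ} (hc : 0 < c) (a : A.carrier) :
    A.upper (c • a) = c * A.upper a := by
  refine le_antisymm (A.upper_smul_le he hc a) ?_
  have h2 := A.upper_smul_le he (inv_pos.2 hc) (c • a)
  rw [smul_smul, inv_mul_cancel₀ hc.ne', one_smul] at h2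
  have h3 := mul_le_mul_of_nonneg_left h2 hc.le
  rw [← mul_assoc, mul_inv_cancel₀ hc.ne', one_mul] at h3
  exact h3

theorem upper_zero_nonneg (he : A.e ≠ 0) : 0 ≤ A.upper 0 := by
  apply le_csInf (A.upperSet_nonempty 0)
  intro r hr
  exact A.nonneg_of_smul_e_nonneg he hr

theorem upper_zero_le (he : A.e ≠ 0) : A.upper 0 ≤ 0 :=
  A.upper_le he (by rw [zero_smul])

theorem neg_upper_neg_le (he : A.e ≠ 0) (a : A.carrier) :
    -A.upper (-a) ≤ A.upper a := by
  have h1 := A.upper_add he a (-a)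
  rw [add_neg_cancel] at h1
  have := A.upper_zero_nonneg he
  linarith

theorem upper_e_le (he : A.e ≠ 0) : A.upper A.e ≤ 1 :=
  A.upper_le he (by rw [one_smul])

theorem upper_neg_e_le (he : A.e ≠ 0) : A.upper (-A.e) ≤ -1 :=
  A.upper_le he (by rw [neg_smul, one_smul])

theorem upper_nonpos_of_nonneg (he : A.e ≠ 0) {a : A.carrier} (h : 0 ≤ a) :
    A.upper (-a) ≤ 0 :=
  A.upper_le he (by rw [zero_smul]; exact A.neg_nonpos_of_nonneg'' h)

end OrderUnitSpace
namespace OrderUnitSpace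
variable (A : OrderUnitSpace)

theorem exists_state_eq (he : A.e ≠ 0) {b : A.carrier} (hb : b ≠ 0) {t : ℝ}
    (ht1 : -A.upper (-b) ≤ t) (ht2 : t ≤ A.upper b) :
    ∃ μ : A.State, μ.1 b = t := by
  set f : A.carrier →ₗ.[ℝ] ℝ := LinearPMap.mkSpanSingleton b t hb with hf
  have hbound : ∀ x : f.domain, f x ≤ A.upper x := by
    intro x
    have hx : (x : A.carrier) ∈ Submodule.span ℝ {b} := x.2
    obtain ⟨s, hs⟩ := Submodule.mem_span_singleton.1 hx
    have hxe : x = (⟨s • b, by rw [hs]; exact x.2⟩ : f.domain) := by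
      apply Subtype.ext; exact hs.symm
    rw [hxe, LinearPMap.mkSpanSingleton'_apply b t _ s _]
    show s • t ≤ A.upper (s • b)
    rcases lt_trichotomy s 0 with hsn | hsz | hsp
    · have h1 : s • b = (-s) • (-b) := by rw [smul_neg, neg_smul, neg_neg]
      rw [h1, A.upper_smul he (by linarith) (-b)]
      have h2 : -t ≤ A.upper (-b) := by linarith
      have := mul_le_mul_of_nonneg_left h2 (by linarith : (0:ℝ) ≤ -s)
      simp only [smul_eq_mul]
      nlinarith
    · rw [hsz, zero_smul, zero_smul]
      exact A.upper_zero_nonneg he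
    · rw [A.upper_smul he hsp b]
      simp only [smul_eq_mul]
      nlinarith
  obtain ⟨g, hg1, hg2⟩ := exists_extension_of_le_sublinear f A.upper
    (fun c hc x => A.upper_smul he hc x) (A.upper_add he) hbound
  have hgb : g b = t := by
    have := hg1 ⟨b, Submodule.mem_span_singleton_self b⟩
    rw [LinearPMap.mkSpanSingleton_apply] at this
    simpa using this
  have hge : g A.e = 1 := by
    have h1 : g A.e ≤ 1 := le_trans (hg2 A.e) (A.upper_e_le he)
    have h2 : g (-A.e) ≤ -1 := le_trans (hg2 (-A.e)) (A.upper_neg_e_le he)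
    rw [map_neg] at h2
    linarith
  have hgpos : ∀ a : A.carrier, 0 ≤ a → 0 ≤ g a := by
    intro a ha
    have h1 : g (-a) ≤ 0 := le_trans (hg2 (-a)) (A.upper_nonpos_of_nonneg he ha)
    rw [map_neg] at h1
    linarith
  exact ⟨⟨g, hge, hgpos⟩, hgb⟩

theorem upper_separates (he : A.e ≠ 0) {b : A.carrier} (hb : ∀ t : ℝ, b ≠ t • A.e) :
    -A.upper (-b) < A.upper b := by
  rcases lt_or_ge (-A.upper (-b)) (A.upper b) with h | h
  · exact h
  exfalso
  have heq : A.upper b = -A.upper (-b) := le_antisymm h (A.neg_upper_neg_le he b)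
  set u := A.upper b with hu
  have h1 : b ≤ u • A.e := A.le_upper_smul_e he b
  have h2 : -b ≤ A.upper (-b) • A.e := A.le_upper_smul_e he (-b)
  have h3 : A.upper (-b) = -u := by rw [heq]; ring
  rw [h3] at h2
  have h4 : u • A.e ≤ b := by
    have h5 := A.add_le_add_left' (-b) ((-u) • A.e) h2 (b + u • A.e)
    have e1 : b + u • A.e + -b = u • A.e := by abel
    have e2 : b + u • A.e + (-u) • A.e = b := by rw [neg_smul]; abel
    rwa [e1, e2] at h5
  exact hb u (le_antisymm h1 h4)

end OrderUnitSpace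
namespace OrderUnitSpace
variable (A : OrderUnitSpace)

theorem rho_self (L : Seminorm ℝ A.carrier) (μ : A.State) : A.rho L μ μ = 0 := by
  simp [rho]

theorem rho_comm (L : Seminorm ℝ A.carrier) (μ ν : A.State) :
    A.rho L μ ν = A.rho L ν μ := by
  simp only [rho]
  congr 1
  funext a
  rw [abs_sub_comm]

theorem rho_triangle (L : Seminorm ℝ A.carrier) (μ κ ν : A.State) :
    A.rho L μ ν ≤ A.rho L μ κ + A.rho L κ ν := by
  refine iSup_le fun a => ?_
  calc ENNReal.ofReal |μ.1 a.1 - ν.1 a.1|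
      ≤ ENNReal.ofReal (|μ.1 a.1 - κ.1 a.1| + |κ.1 a.1 - ν.1 a.1|) :=
        ENNReal.ofReal_le_ofReal (abs_sub_le _ _ _)
    _ ≤ ENNReal.ofReal |μ.1 a.1 - κ.1 a.1| + ENNReal.ofReal |κ.1 a.1 - ν.1 a.1| :=
        ENNReal.ofReal_add_le
    _ ≤ A.rho L μ κ + A.rho L κ ν := by
        exact add_le_add (le_iSup (fun a : {a : A.carrier // L a ≤ 1} =>
          ENNReal.ofReal |μ.1 a.1 - κ.1 a.1|) a)
          (le_iSup (fun a : {a : A.carrier // L a ≤ 1} =>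
          ENNReal.ofReal |κ.1 a.1 - ν.1 a.1|) a)

/-- If the ball topology of `ρ_L` agrees with the weak-* topology, then `ρ_L`
takes only finite values (since the state space is path-connected). -/
theorem rho_ne_top (L : Seminorm ℝ A.carrier)
    (htop : ballTopology (A.rho L) = (inferInstance : TopologicalSpace A.State))
    (x y : A.State) : A.rho L x y ≠ ⊤ := by
  intro hxy
  have hgen : ∀ (z : A.State) (ε : ℝ≥0∞), 0 < ε → IsOpen {w : A.State | A.rho L z w < ε} := by
    intro z ε hε
    have h1 : @IsOpen A.State (ballTopology (A.rho L)) {w : A.State | A.rho L z w < ε} := by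
      rw [ballTopology]
      exact TopologicalSpace.isOpen_generateFrom_of_mem ⟨z, ε, hε, rfl⟩
    rw [htop] at h1
    exact h1
  have hU : IsOpen {z : A.State | A.rho L x z < ⊤} := hgen x ⊤ (by norm_num)
  have hV : IsOpen {z : A.State | ¬ A.rho L x z < ⊤} := by
    have hrw : {z : A.State | ¬ A.rho L x z < ⊤} =
        ⋃ (z : A.State) (_ : ¬ A.rho L x z < ⊤), {w : A.State | A.rho L z w < ⊤} := by
      ext w
      simp only [Set.mem_setOf_eq, Set.mem_iUnion]
      constructor
      · intro hw
        exact ⟨w, hw, by rw [A.rho_self L w]; norm_num⟩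
      · rintro ⟨z, hz, hzw⟩ hxw
        apply hz
        calc A.rho L x z ≤ A.rho L x w + A.rho L w z := A.rho_triangle L x w z
          _ < ⊤ := by
              rw [A.rho_comm L w z]
              exact ENNReal.add_lt_top.2 ⟨hxw, hzw⟩
    rw [hrw]
    exact isOpen_iUnion fun z => isOpen_iUnion fun hz => hgen z ⊤ (by norm_num)
  -- a path from y to x in the state space
  set σ : ℝ → ℝ := fun s => min 1 (max 0 s) with hσ
  have hσ0 : ∀ s, 0 ≤ σ s := fun s => le_min zero_le_one (le_max_left 0 s)
  have hσ1 : ∀ s, σ s ≤ 1 := fun s => min_le_left 1 (max 0 s)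
  have hstate : ∀ s : ℝ, A.IsState (σ s • x.1 + (1 - σ s) • y.1) := by
    intro s
    constructor
    · simp only [LinearMap.add_apply, LinearMap.smul_apply, smul_eq_mul, x.2.1, y.2.1]
      ring
    · intro a ha
      simp only [LinearMap.add_apply, LinearMap.smul_apply, smul_eq_mul]
      have h1 := x.2.2 a ha
      have h2 := y.2.2 a ha
      have := hσ0 s
      have := hσ1 s
      nlinarith
  set f : ℝ → A.State := fun s => ⟨σ s • x.1 + (1 - σ s) • y.1, hstate s⟩ with hfdef
  have hσc : Continuous σ := continuous_const.min (continuous_const.max continuous_id)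
  have hf : Continuous f := by
    apply continuous_induced_rng.2
    apply continuous_pi
    intro a
    show Continuous fun s => (σ s • x.1 + (1 - σ s) • y.1) a
    simp only [LinearMap.add_apply, LinearMap.smul_apply, smul_eq_mul]
    exact (hσc.mul continuous_const).add ((continuous_const.sub hσc).mul continuous_const)
  have hf1 : f 1 = x := by
    apply Subtype.ext
    have hσv : σ 1 = 1 := by simp [hσ]
    ext a
    simp [hfdef, hσv]
  have hf0 : f 0 = y := by
    apply Subtype.ext
    have hσv : σ 0 = 0 := by simp [hσ]
    ext a
    simp [hfdef, hσv]
  set K := f ⁻¹' {z : A.State | A.rho L x z < ⊤} with hK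
  have hKopen : IsOpen K := hU.preimage hf
  have hKclosed : IsClosed K := by
    rw [← isOpen_compl_iff]
    have : Kᶜ = f ⁻¹' {z : A.State | ¬ A.rho L x z < ⊤} := by
      ext s; simp [hK]
    rw [this]
    exact hV.preimage hf
  have hK1 : (1:ℝ) ∈ K := by
    rw [hK, Set.mem_preimage, hf1]
    simp only [Set.mem_setOf_eq, A.rho_self L x]
    norm_num
  have huniv := IsClopen.eq_univ ⟨hKclosed, hKopen⟩ ⟨1, hK1⟩
  have h0 : (0:ℝ) ∈ K := by rw [huniv]; trivial
  rw [hK, Set.mem_preimage, hf0] at h0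
  simp only [Set.mem_setOf_eq, hxy, lt_irrefl] at h0

end OrderUnitSpace
/-- Transfer of ball topologies along an isometry. -/
theorem ballTopology_induced {S T : Type*} (f : S → T) (ρS : S → S → ℝ≥0∞)
    (ρT : T → T → ℝ≥0∞)
    (hself : ∀ s, ρS s s = 0)
    (htri : ∀ x y z : T, ρT x z ≤ ρT x y + ρT y z)
    (hiso : ∀ x y : S, ρT (f x) (f y) = ρS x y) :
    ballTopology ρS = TopologicalSpace.induced f (ballTopology ρT) := by
  have hT : ballTopology ρT = TopologicalSpace.generateFrom
      {U : Set T | ∃ (μ : T) (ε : ℝ≥0∞), 0 < ε ∧ U = {ν | ρT μ ν < ε}} := rfl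
  have hbasicS : ∀ (z : S) (ε : ℝ≥0∞), 0 < ε →
      @IsOpen S (ballTopology ρS) {w : S | ρS z w < ε} := fun z ε hε =>
    TopologicalSpace.isOpen_generateFrom_of_mem ⟨z, ε, hε, rfl⟩
  apply le_antisymm
  · rw [hT, induced_generateFrom_eq]
    apply le_generateFrom
    rintro s ⟨U, ⟨κ, ε, hε, rfl⟩, rfl⟩
    have hrw : f ⁻¹' {ν | ρT κ ν < ε} =
        ⋃ (ν : S) (_ : ν ∈ f ⁻¹' {ν | ρT κ ν < ε}), {w : S | ρS ν w < ε - ρT κ (f ν)} := by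
      ext w
      simp only [Set.mem_preimage, Set.mem_setOf_eq, Set.mem_iUnion]
      constructor
      · intro hw
        exact ⟨w, hw, by rw [hself]; exact tsub_pos_iff_lt.2 hw⟩
      · rintro ⟨ν, hν, hw⟩
        have hd : ρT κ (f ν) ≠ ⊤ := (lt_of_lt_of_le hν le_top).ne
        calc ρT κ (f w) ≤ ρT κ (f ν) + ρT (f ν) (f w) := htri _ _ _
          _ = ρT κ (f ν) + ρS ν w := by rw [hiso]
          _ < ρT κ (f ν) + (ε - ρT κ (f ν)) := ENNReal.add_lt_add_left hd hw
          _ = ε := add_tsub_cancel_of_le hν.le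
    rw [hrw]
    exact @isOpen_iUnion S S (ballTopology ρS) _ fun ν =>
      @isOpen_iUnion S _ (ballTopology ρS) _ fun hν =>
        hbasicS ν _ (tsub_pos_iff_lt.2 hν)
  · apply le_generateFrom
    rintro s ⟨μ0, ε, hε, rfl⟩
    rw [@isOpen_induced_iff S T (ballTopology ρT) _ f]
    refine ⟨{w : T | ρT (f μ0) w < ε}, ?_, ?_⟩
    · exact TopologicalSpace.isOpen_generateFrom_of_mem ⟨f μ0, ε, hε, rfl⟩
    · ext ν
      simp only [Set.mem_preimage, Set.mem_setOf_eq, hiso]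

namespace OrderUnitSpace

/-- The weak-* topology on `S(B)` is induced from that of `S(A)` along `S(π)`
when `π` is surjective. -/
theorem state_top_induced (A B : OrderUnitSpace) (π : A.carrier →ₗ[ℝ] B.carrier)
    (hπ : A.IsMorphism B π) (hsurj : Function.Surjective π) :
    (inferInstance : TopologicalSpace B.State) =
      TopologicalSpace.induced (A.pullState B π hπ) inferInstance := by
  have hA : (inferInstance : TopologicalSpace A.State) =
      TopologicalSpace.induced (fun μ : A.State => (μ.1 : A.carrier → ℝ))
        Pi.topologicalSpace := rfl
  have hB : (inferInstance : TopologicalSpace B.State) =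
      TopologicalSpace.induced (fun μ : B.State => (μ.1 : B.carrier → ℝ))
        Pi.topologicalSpace := rfl
  rw [hA, hB, induced_compose]
  have hcomp : ((fun μ : A.State => (μ.1 : A.carrier → ℝ)) ∘ (A.pullState B π hπ)) =
      (fun g : B.carrier → ℝ => g ∘ π) ∘ (fun μ : B.State => (μ.1 : B.carrier → ℝ)) := by
    funext μ
    rfl
  rw [hcomp, ← induced_compose]
  congr 1
  -- `induced (· ∘ π)` of the product topology on `A.carrier → ℝ` is the
  -- product topology on `B.carrier → ℝ`
  have h1 : (Pi.topologicalSpace : TopologicalSpace (A.carrier → ℝ)) =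
      ⨅ a : A.carrier, TopologicalSpace.induced (fun g : A.carrier → ℝ => g a)
        inferInstance := rfl
  rw [h1, induced_iInf]
  have h2 : ∀ a : A.carrier,
      TopologicalSpace.induced (fun g : B.carrier → ℝ => g ∘ π)
        (TopologicalSpace.induced (fun g : A.carrier → ℝ => g a) inferInstance) =
      TopologicalSpace.induced (fun g : B.carrier → ℝ => g (π a)) inferInstance :=
    fun a => induced_compose
  rw [iInf_congr h2]
  exact (hsurj.iInf_comp fun b =>
    TopologicalSpace.induced (fun g : B.carrier → ℝ => g b) inferInstance).symm

end OrderUnitSpace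

/-- **Proposition 3.1 of Rieffel.** Let `π : A → B` be a surjective morphism of
order-unit spaces, `L` a Lipschitz seminorm on `A`, and `L_B` the corresponding
quotient seminorm on `B`. Then `π'` is an isometry for the dual seminorms `L_B'` and
`L'` on `B'°` and `A'°`, and `S(π)` is an isometry for `ρ_{L_B}` and `ρ_L`.
If moreover `L` is a Lip-norm, then so is `L_B`. -/
theorem quotient_dual_isometry (A B : OrderUnitSpace)
    (π : A.carrier →ₗ[ℝ] B.carrier) (hπ : A.IsMorphism B π)
    (hsurj : Function.Surjective π)
    (L : Seminorm ℝ A.carrier) (hL : A.IsLipschitz L)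
    (LB : Seminorm ℝ B.carrier)
    (hq : Induces π (fun a => L a) (fun b => LB b)) :
    (∀ lam : B.carrier →ₗ[ℝ] ℝ, lam B.e = 0 → BoundedFunctional B lam →
      dualSeminorm A L (lam.comp π) = dualSeminorm B LB lam) ∧
    (∀ μ ν : B.State,
      A.rho L (A.pullState B π hπ μ) (A.pullState B π hπ ν) = B.rho LB μ ν) ∧
    (A.IsLipNorm L → B.IsLipNorm LB) := by
  -- quotient seminorm facts
  have hSne : ∀ b : B.carrier, {r : ℝ | ∃ a, π a = b ∧ L a = r}.Nonempty := by
    intro b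
    obtain ⟨a, ha⟩ := hsurj b
    exact ⟨L a, a, ha, rfl⟩
  have hSbdd : ∀ b : B.carrier, BddBelow {r : ℝ | ∃ a, π a = b ∧ L a = r} := fun b =>
    ⟨0, by rintro r ⟨a, -, rfl⟩; exact apply_nonneg L a⟩
  have hqb : ∀ b : B.carrier, LB b = sInf {r : ℝ | ∃ a, π a = b ∧ L a = r} := fun b => by
    simpa [quotientSeminorm] using hq b
  have hLB_le : ∀ a : A.carrier, LB (π a) ≤ L a := fun a => by
    rw [hqb]; exact csInf_le (hSbdd _) ⟨a, rfl, rfl⟩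
  -- the key isometry computation for the dual seminorms
  have key : ∀ lam : B.carrier →ₗ[ℝ] ℝ,
      (⨆ a : {a : A.carrier // L a ≤ 1}, ENNReal.ofReal |lam (π a.1)|)
        = ⨆ b : {b : B.carrier // LB b ≤ 1}, ENNReal.ofReal |lam b.1| := by
    intro lam
    apply le_antisymm
    · refine iSup_le fun a => ?_
      exact le_iSup_of_le ⟨π a.1, le_trans (hLB_le a.1) a.2⟩ le_rfl
    · refine iSup_le fun b => ?_
      apply ENNReal.le_of_forall_nnreal_lt
      intro r hr
      rcases eq_or_lt_of_le (zero_le : (0:NNReal) ≤ r) with hr0 | hr0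
      · rw [← hr0]; simp
      have hrpos : (0:ℝ) < (r:ℝ) := hr0
      have hrR : (r:ℝ) < |lam b.1| := by
        by_contra hc
        push_neg at hc
        have h1 : ENNReal.ofReal |lam b.1| ≤ ENNReal.ofReal (r:ℝ) :=
          ENNReal.ofReal_le_ofReal hc
        rw [ENNReal.ofReal_coe_nnreal] at h1
        exact absurd (lt_of_lt_of_le hr h1) (lt_irrefl _)
      have hlb : |lam b.1| ≠ 0 := (lt_trans hrpos hrR).ne'
      set s : ℝ := |lam b.1| / (r:ℝ) with hs
      have hs1 : (1:ℝ) < s := (one_lt_div hrpos).2 hrR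
      have hspos : (0:ℝ) < s := lt_trans one_pos hs1
      have hlt : sInf {t : ℝ | ∃ a, π a = b.1 ∧ L a = t} < s :=
        lt_of_le_of_lt (by rw [← hqb]; exact b.2) hs1
      obtain ⟨t, ⟨a, hab, hat⟩, hts⟩ := exists_lt_of_csInf_lt (hSne b.1) hlt
      have hLa : L (s⁻¹ • a) ≤ 1 := by
        rw [map_smul_eq_mul, Real.norm_eq_abs, abs_of_pos (inv_pos.2 hspos)]
        calc s⁻¹ * L a ≤ s⁻¹ * s := by
              apply mul_le_mul_of_nonneg_left _ (inv_pos.2 hspos).le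
              rw [hat]; exact hts.le
          _ = 1 := inv_mul_cancel₀ hspos.ne'
      have hval : |lam (π (s⁻¹ • a))| = (r:ℝ) := by
        rw [map_smul, hab, map_smul, smul_eq_mul, abs_mul, abs_of_pos (inv_pos.2 hspos),
          hs, inv_div, div_mul_cancel₀ _ hlb]
      calc (↑r : ℝ≥0∞) = ENNReal.ofReal |lam (π ((s⁻¹ • a : A.carrier)))| := by
            rw [hval, ENNReal.ofReal_coe_nnreal]
        _ ≤ _ := le_iSup (fun a : {a : A.carrier // L a ≤ 1} =>
            ENNReal.ofReal |lam (π a.1)|) ⟨s⁻¹ • a, hLa⟩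
  -- part 2 : the state-space isometry
  have part2 : ∀ μ ν : B.State,
      A.rho L (A.pullState B π hπ μ) (A.pullState B π hπ ν) = B.rho LB μ ν := by
    intro μ ν
    have h2 : A.rho L (A.pullState B π hπ μ) (A.pullState B π hπ ν)
        = ⨆ a : {a : A.carrier // L a ≤ 1}, ENNReal.ofReal |(μ.1 - ν.1) (π a.1)| := by
      simp only [OrderUnitSpace.rho, OrderUnitSpace.pullState, LinearMap.comp_apply,
        LinearMap.sub_apply]
    have h3 : B.rho LB μ ν
        = ⨆ b : {b : B.carrier // LB b ≤ 1}, ENNReal.ofReal |(μ.1 - ν.1) b.1| := by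
      simp only [OrderUnitSpace.rho, LinearMap.sub_apply]
    rw [h2, h3]
    exact key (μ.1 - ν.1)
  refine ⟨?_, part2, ?_⟩
  · intro lam _ _
    show (⨆ a : {a : A.carrier // L a ≤ 1}, ENNReal.ofReal |(lam.comp π) a.1|) = _
    simp only [LinearMap.comp_apply]
    exact key lam
  · intro hlip
    constructor
    · -- LB is a Lipschitz seminorm
      intro b
      constructor
      · intro hb0
        by_contra hbt
        push_neg at hbt
        -- B is nondegenerate
        have hbne : b ≠ 0 := by
          intro h0
          exact hbt 0 (by rw [h0, zero_smul])
        have he : B.e ≠ 0 := by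
          intro he0
          apply hbne
          obtain ⟨r, hr⟩ := B.orderUnit b
          obtain ⟨r', hr'⟩ := B.orderUnit (-b)
          rw [he0, smul_zero] at hr hr'
          exact le_antisymm hr (B.nonneg_of_neg_nonpos'' hr')
        -- two states of B with different values on b
        have hsep := B.upper_separates he hbt
        obtain ⟨μ, hμ⟩ := B.exists_state_eq he hbne (le_of_lt hsep) (le_refl _)
        obtain ⟨ν, hν⟩ := B.exists_state_eq he hbne (le_refl _) (le_of_lt hsep)
        have hd : (0:ℝ) < |μ.1 b - ν.1 b| := by
          rw [hμ, hν]
          rw [abs_pos]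
          intro hc
          rw [sub_eq_zero] at hc
          exact absurd (hc ▸ hsep) (lt_irrefl _)
        -- rho LB μ ν = ⊤
        have htopB : B.rho LB μ ν = ⊤ := by
          rw [eq_top_iff]
          apply ENNReal.le_of_forall_nnreal_lt
          intro r _
          obtain ⟨n, hn⟩ := exists_nat_ge ((r:ℝ) / |μ.1 b - ν.1 b|)
          have hrn : (r:ℝ) ≤ (n:ℝ) * |μ.1 b - ν.1 b| := by
            rw [div_le_iff₀ hd] at hn
            linarith
          have hidx : LB ((n:ℝ) • b) ≤ 1 := by
            rw [map_smul_eq_mul, hb0, mul_zero]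
            norm_num
          have hvn : |μ.1 ((n:ℝ) • b) - ν.1 ((n:ℝ) • b)| = (n:ℝ) * |μ.1 b - ν.1 b| := by
            rw [map_smul, map_smul, smul_eq_mul, smul_eq_mul, ← mul_sub, abs_mul,
              Nat.abs_cast]
          calc (↑r : ℝ≥0∞) = ENNReal.ofReal (r:ℝ) := (ENNReal.ofReal_coe_nnreal).symm
            _ ≤ ENNReal.ofReal |μ.1 ((n:ℝ) • b) - ν.1 ((n:ℝ) • b)| := by
                rw [hvn]; exact ENNReal.ofReal_le_ofReal hrn
            _ ≤ _ := le_iSup (fun c : {c : B.carrier // LB c ≤ 1} =>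
                ENNReal.ofReal |μ.1 c.1 - ν.1 c.1|) ⟨(n:ℝ) • b, hidx⟩
        have htopA : A.rho L (A.pullState B π hπ μ) (A.pullState B π hπ ν) = ⊤ := by
          rw [part2 μ ν]; exact htopB
        exact A.rho_ne_top L hlip.2 _ _ htopA
      · rintro ⟨t, rfl⟩
        refine le_antisymm ?_ (apply_nonneg LB _)
        rw [hqb]
        apply csInf_le (hSbdd _)
        refine ⟨t • A.e, by rw [map_smul, hπ.1], ?_⟩
        rw [map_smul_eq_mul, (hL A.e).2 ⟨1, (one_smul ℝ A.e).symm⟩, mul_zero]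
    · -- the metric from LB gives the weak-* topology
      have h2 : ballTopology (B.rho LB) =
          TopologicalSpace.induced (A.pullState B π hπ) (ballTopology (A.rho L)) :=
        ballTopology_induced (A.pullState B π hπ) (B.rho LB) (A.rho L)
          (B.rho_self LB) (A.rho_triangle L) part2
      rw [h2, hlip.2]
      exact (OrderUnitSpace.state_top_induced A B π hπ hsurj).symm
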